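/- Corollary 2 (leakage and seepage of a cross-talk-free product channel): let n ≥ 1, and for k = 1,…,n let Λ_k be a trace-preserving linear map on 3×3 complex matrices and p_k, q_k reals with tr(π_c Λ_k(π_c)) = 2(1 − p_k) and tr(π_c Λ_k(I_3)) = 2(1 − p_k) + 2q_k. Let Λ be a linear map on 3^n × 3^n complex matrices such that Λ(⊗_{k} A_k) = ⊗_{k} Λ_k(A_k) for all 3×3 matrices A_1,…,A_n, where (⊗_k A_k)_{x,y} = ∏_k (A_k)_{x_k,y_k}. Then tr(Π_l · Λ(Π_c / 2^n)) = 1 − ∏_{k=1}^n (1 − p_k) and tr(Π_c · Λ(Π_l / (3^n − 2^n))) = (2^n / (3^n − 2^n)) · ( ∏_{k=1}^n (1 − p_k + q_k) − ∏_{k=1}^n (1 − p_k) ). -/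

import Mathlib

open Matrix Finset

noncomputable section

/-- The single-site computational projector π_c = |0⟩⟨0| + |1⟩⟨1| on ℂ³. -/
def piC : Matrix (Fin 3) (Fin 3) ℂ :=
  Matrix.diagonal fun x => if (x : ℕ) < 2 then 1 else 0

/-- The n-fold Kronecker product (⊗ₖ Aₖ)_{x,y} = ∏ₖ (Aₖ)_{xₖ,yₖ}. -/
def kron {n : ℕ} (A : Fin n → Matrix (Fin 3) (Fin 3) ℂ) :
    Matrix (Fin n → Fin 3) (Fin n → Fin 3) ℂ :=
  Matrix.of fun x y => ∏ k, A k (x k) (y k)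

/-- The computational projector Π_c on the n-qutrit space: the diagonal projector
onto span{|k⟩ : k ∈ {0,1}ⁿ}. -/
def compProj (n : ℕ) : Matrix (Fin n → Fin 3) (Fin n → Fin 3) ℂ :=
  Matrix.diagonal fun k => if ∀ j, (k j : ℕ) < 2 then 1 else 0

/-- The leakage projector Π_l = I − Π_c. -/
def leakProj (n : ℕ) : Matrix (Fin n → Fin 3) (Fin n → Fin 3) ℂ := 1 - compProj n

lemma kron_mul {n : ℕ} (A B : Fin n → Matrix (Fin 3) (Fin 3) ℂ) :
    kron A * kron B = kron fun k => A k * B k := by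
  ext x y
  simp only [kron, Matrix.mul_apply, Matrix.of_apply, ← Finset.prod_mul_distrib]
  exact (Fintype.prod_sum fun k j => A k (x k) j * B k j (y k)).symm

lemma trace_kron {n : ℕ} (A : Fin n → Matrix (Fin 3) (Fin 3) ℂ) :
    Matrix.trace (kron A) = ∏ k, Matrix.trace (A k) := by
  simp only [Matrix.trace, Matrix.diag, kron, Matrix.of_apply]
  exact (Fintype.prod_sum fun k j => A k j j).symm

lemma kron_diagonal {n : ℕ} (d : Fin n → Fin 3 → ℂ) :
    kron (fun k => Matrix.diagonal (d k)) = Matrix.diagonal fun x => ∏ k, d k (x k) := by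
  ext x y
  by_cases h : x = y
  · subst h; simp [kron, Matrix.diagonal]
  · obtain ⟨j, hj⟩ := Function.ne_iff.mp h
    rw [Matrix.diagonal_apply_ne _ h]
    exact Finset.prod_eq_zero (Finset.mem_univ j) (Matrix.diagonal_apply_ne _ hj)

lemma compProj_eq (n : ℕ) : compProj n = kron fun _ => piC := by
  have hfun : (fun k : Fin n → Fin 3 => if ∀ j, ((k j : ℕ)) < 2 then (1 : ℂ) else 0)
      = fun x => ∏ k, if ((x k : ℕ)) < 2 then (1 : ℂ) else 0 := by
    funext x
    by_cases h : ∀ j, (x j : ℕ) < 2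
    · rw [if_pos h]
      exact (Finset.prod_eq_one fun j _ => if_pos (h j)).symm
    · push_neg at h
      obtain ⟨j, hj⟩ := h
      rw [if_neg (by push_neg; exact ⟨j, hj⟩)]
      exact (Finset.prod_eq_zero (Finset.mem_univ j) (show (if ((x j : ℕ)) < 2 then (1 : ℂ) else 0) = 0 from if_neg (Nat.not_lt.mpr hj))).symm
  rw [compProj, hfun, piC, kron_diagonal]

lemma one_eq_kron (n : ℕ) :
    (1 : Matrix (Fin n → Fin 3) (Fin n → Fin 3) ℂ) = kron fun _ => 1 := by
  rw [show (1 : Matrix (Fin 3) (Fin 3) ℂ) = Matrix.diagonal fun _ => 1 from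
    Matrix.diagonal_one.symm, kron_diagonal]
  simp

lemma trace_piC : Matrix.trace piC = 2 := by
  simp only [piC, Matrix.trace, Matrix.diag, Matrix.diagonal_apply_eq, Fin.sum_univ_three]
  norm_num

/-- Corollary 2 (leakage and seepage of a cross-talk-free product channel). -/
theorem crosstalk_free_leakage (n : ℕ) (hn : 1 ≤ n)
    (Λk : Fin n → (Matrix (Fin 3) (Fin 3) ℂ →ₗ[ℂ] Matrix (Fin 3) (Fin 3) ℂ))
    (p q : Fin n → ℝ)
    (htp : ∀ (k : Fin n) (A : Matrix (Fin 3) (Fin 3) ℂ),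
      Matrix.trace (Λk k A) = Matrix.trace A)
    (hp : ∀ k : Fin n,
      Matrix.trace (piC * Λk k piC) = ((2 * (1 - p k) : ℝ) : ℂ))
    (hq : ∀ k : Fin n,
      Matrix.trace (piC * Λk k 1) = ((2 * (1 - p k) + 2 * q k : ℝ) : ℂ))
    (Λ : Matrix (Fin n → Fin 3) (Fin n → Fin 3) ℂ →ₗ[ℂ]
      Matrix (Fin n → Fin 3) (Fin n → Fin 3) ℂ)
    (hΛ : ∀ A : Fin n → Matrix (Fin 3) (Fin 3) ℂ,
      Λ (kron A) = kron fun k => Λk k (A k)) :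
    Matrix.trace (leakProj n * Λ (((2 : ℂ) ^ n)⁻¹ • compProj n)) =
        1 - ∏ k, (1 - (p k : ℂ)) ∧
      Matrix.trace (compProj n * Λ (((3 : ℂ) ^ n - 2 ^ n)⁻¹ • leakProj n)) =
        ((2 : ℂ) ^ n / ((3 : ℂ) ^ n - 2 ^ n)) *
          (∏ k, (1 - (p k : ℂ) + (q k : ℂ)) - ∏ k, (1 - (p k : ℂ))) := by
  have hΛc : Λ (compProj n) = kron fun k => Λk k piC := by
    rw [compProj_eq, hΛ]
  have hΛ1 : Λ 1 = kron fun k => Λk k 1 := by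
    rw [one_eq_kron, hΛ]
  have hT1 : Matrix.trace (Λ (compProj n)) = (2 : ℂ) ^ n := by
    rw [hΛc, trace_kron]
    simp [htp, trace_piC]
  have hTcc : Matrix.trace (compProj n * Λ (compProj n))
      = 2 ^ n * ∏ k, (1 - (p k : ℂ)) := by
    rw [hΛc, compProj_eq, kron_mul, trace_kron]
    simp only [hp]
    push_cast
    rw [Finset.prod_mul_distrib]
    simp
  have hTc1 : Matrix.trace (compProj n * Λ 1)
      = 2 ^ n * ∏ k, (1 - (p k : ℂ) + (q k : ℂ)) := by
    rw [hΛ1, compProj_eq, kron_mul, trace_kron]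
    simp only [hq]
    push_cast
    have : ∀ k : Fin n, (2 : ℂ) * (1 - (p k : ℂ)) + 2 * (q k : ℂ)
        = 2 * (1 - (p k : ℂ) + (q k : ℂ)) := fun k => by ring
    simp only [this]
    rw [Finset.prod_mul_distrib]
    simp
  have h2 : (2 : ℂ) ^ n ≠ 0 := pow_ne_zero _ two_ne_zero
  constructor
  · rw [leakProj, _root_.map_smul, Matrix.mul_smul, Matrix.trace_smul, Matrix.sub_mul,
      Matrix.one_mul, Matrix.trace_sub, hT1, hTcc]
    field_simp
    rw [smul_eq_mul, ← mul_assoc, one_div, inv_mul_cancel₀ h2, one_mul]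
  · rw [leakProj, _root_.map_smul, map_sub, Matrix.mul_smul, Matrix.trace_smul,
      Matrix.mul_sub, Matrix.trace_sub, hTc1, hTcc, div_eq_mul_inv]
    simp only [smul_eq_mul]
    ring
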